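/- arXiv:2110.06774 — 5 statements merged into one kernel-verified Lean document; each statement's English description precedes it below -/
import Mathlib

section
/- For integers n ≥ 2 and l ≥ 1, the number of permutations σ ∈ S_n with σ(1)=1 having exactly 2l alternating runs in the cyclic sense (i.e., there exist indices 1=t_1<t_2<···<t_{2l} ≤ n such that σ increases on each interval [t_{2u-1}, t_{2u}] and decreases on each interval [t_{2u}, t_{2u+1}], cyclically with t_{2l+1}=t_1) is at most (2l)^(n-1). -/
open Finset

private lemma chainInc {β : Type*} [Preorder β] (f : ℕ → β) :
    ∀ b a, a < b → (∀ i, a ≤ i → i < b → f i < f (i + 1)) → f a < f b := by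
  intro b
  induction b with
  | zero => intro a h; omega
  | succ b ih =>
    intro a hab hstep
    rcases eq_or_lt_of_le (Nat.lt_succ_iff.mp hab) with h | h
    · subst h; exact hstep a le_rfl (Nat.lt_succ_self a)
    · exact lt_trans (ih a h (fun i h1 h2 => hstep i h1 (Nat.lt_succ_of_lt h2)))
        (hstep b (by omega) (Nat.lt_succ_self b))

private lemma chainDec {β : Type*} [Preorder β] (f : ℕ → β) :
    ∀ b a, a < b → (∀ i, a ≤ i → i < b → f (i + 1) < f i) → f b < f a := by
  intro b
  induction b with
  | zero => intro a h; omega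
  | succ b ih =>
    intro a hab hstep
    rcases eq_or_lt_of_le (Nat.lt_succ_iff.mp hab) with h | h
    · subst h; exact hstep a le_rfl (Nat.lt_succ_self a)
    · exact lt_trans (hstep b (by omega) (Nat.lt_succ_self b))
        (ih a h (fun i h1 h2 => hstep i h1 (Nat.lt_succ_of_lt h2)))

/-- The run-label of a position. -/
private def runL (t : ℕ → ℕ) (l : ℕ) (p : ℕ) : ℕ :=
  Nat.findGreatest (fun j => t j ≤ p) (2 * l - 1)

private lemma runL_lt {t : ℕ → ℕ} {l : ℕ} (hl : 1 ≤ l) (p : ℕ) : runL t l p < 2 * l :=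
  lt_of_le_of_lt (Nat.findGreatest_le _) (by omega)

private lemma runL_spec {t : ℕ → ℕ} {l : ℕ} (ht0 : t 0 = 0) (p : ℕ) :
    t (runL t l p) ≤ p :=
  Nat.findGreatest_spec (P := fun j => t j ≤ p) (Nat.zero_le _) (by omega)

private lemma runL_gt {t : ℕ → ℕ} {l : ℕ} (p : ℕ) (h : runL t l p + 1 < 2 * l) :
    p < t (runL t l p + 1) := by
  by_contra hc
  push_neg at hc
  have h2 : runL t l p + 1 ≤ 2 * l - 1 := by omega
  exact Nat.findGreatest_is_greatest (P := fun j => t j ≤ p)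
    (Nat.lt_succ_self _) h2 hc

private lemma runL_mono {t : ℕ → ℕ} {l : ℕ} {p q : ℕ} (h : p ≤ q) :
    runL t l p ≤ runL t l q :=
  Nat.findGreatest_mono (fun _ hj => le_trans hj h) le_rfl

private lemma runL_zero {t : ℕ → ℕ} {l : ℕ} (hl : 1 ≤ l) (ht0 : t 0 = 0)
    (hmono : ∀ a b : ℕ, a < b → b < 2 * l → t a < t b) : runL t l 0 = 0 := by
  by_contra h
  have h1 : runL t l 0 < 2 * l := runL_lt hl 0
  have h2 : t (runL t l 0) ≤ 0 := runL_spec ht0 0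
  have h3 : t 0 < t (runL t l 0) := hmono 0 _ (by omega) h1
  omega

private lemma key {n l : ℕ} (hl : 1 ≤ l) (σ : Equiv.Perm (Fin n))
    (t : ℕ → ℕ) (ht0 : t 0 = 0)
    (hmono : ∀ a b : ℕ, a < b → b < 2 * l → t a < t b)
    (hinc : ∀ u : ℕ, ∀ hu : u < l, ∀ i : ℕ, ∀ h1 : t (2 * u) ≤ i, ∀ h2 : i < t (2 * u + 1),
      ∀ h3 : i < n - 1, σ ⟨i, by omega⟩ < σ ⟨i + 1, by omega⟩)
    (hdec : ∀ u : ℕ, ∀ hu : u < l, ∀ i : ℕ, ∀ h1 : t (2 * u + 1) ≤ i,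
      ∀ h2 : i < (if u + 1 < l then t (2 * u + 2) else n - 1),
      ∀ h3 : i < n - 1, σ ⟨i + 1, by omega⟩ < σ ⟨i, by omega⟩)
    (g : Fin n → ℕ)
    (hg : ∀ w : Fin n, g w = runL t l ((σ.symm w : Fin n) : ℕ))
    (v : Fin n) :
    ((σ.symm v : Fin n) : ℕ) = (Finset.univ.filter (fun w : Fin n =>
      g w < g v ∨ (g w = g v ∧ ((Even (g w) ∧ w < v) ∨ (¬ Even (g w) ∧ v < w))))).card := by
  -- block monotonicity
  have hB : ∀ p q : Fin n, (p : ℕ) < (q : ℕ) → runL t l p = runL t l q →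
      ((Even (runL t l (p : ℕ)) → σ p < σ q) ∧ (¬ Even (runL t l (p : ℕ)) → σ q < σ p)) := by
    intro p q hpq hEq
    have hqn : (q : ℕ) < n := q.isLt
    set f : ℕ → Fin n := fun k => if h : k < n then σ ⟨k, h⟩ else σ p with hf
    have hfp : f (p : ℕ) = σ p := by
      rw [hf]; simp only [p.isLt, dif_pos, Fin.eta]
    have hfq : f (q : ℕ) = σ q := by
      rw [hf]; simp only [q.isLt, dif_pos, Fin.eta]
    constructor
    · intro hev
      obtain ⟨u, hu⟩ := hev
      have hj : runL t l (p : ℕ) = 2 * u := by omega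
      have hlt : runL t l (p : ℕ) < 2 * l := runL_lt hl _
      have hul : u < l := by omega
      have h1 : runL t l (q : ℕ) + 1 < 2 * l := by omega
      have hq3 : (q : ℕ) < t (runL t l (q : ℕ) + 1) := runL_gt _ h1
      have hstep : ∀ i, (p : ℕ) ≤ i → i < (q : ℕ) → f i < f (i + 1) := by
        intro i hi1 hi2
        have hin : i < n := lt_trans hi2 hqn
        have hin1 : i + 1 < n := by omega
        have h3 : i < n - 1 := by omega
        have hta : t (2 * u) ≤ i := le_trans (hj ▸ runL_spec ht0 (p : ℕ)) hi1
        have htb : i < t (2 * u + 1) := by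
          have : (q : ℕ) < t (2 * u + 1) := by rw [← hEq, hj] at hq3; exact hq3
          omega
        have := hinc u hul i hta htb h3
        rw [hf]; simp only [hin, hin1, dif_pos]
        exact this
      have := chainInc f (q : ℕ) (p : ℕ) hpq hstep
      rwa [hfp, hfq] at this
    · intro hodd
      rw [Nat.not_even_iff_odd] at hodd
      obtain ⟨u, hu⟩ := hodd
      have hlt : runL t l (p : ℕ) < 2 * l := runL_lt hl _
      have hul : u < l := by omega
      have hstep : ∀ i, (p : ℕ) ≤ i → i < (q : ℕ) → f (i + 1) < f i := by
        intro i hi1 hi2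
        have hin : i < n := lt_trans hi2 hqn
        have hin1 : i + 1 < n := by omega
        have h3 : i < n - 1 := by omega
        have hta : t (2 * u + 1) ≤ i := le_trans (hu ▸ runL_spec ht0 (p : ℕ)) hi1
        have htb : i < (if u + 1 < l then t (2 * u + 2) else n - 1) := by
          by_cases hc : u + 1 < l
          · rw [if_pos hc]
            have h1 : runL t l (q : ℕ) + 1 < 2 * l := by omega
            have hq3 : (q : ℕ) < t (runL t l (q : ℕ) + 1) := runL_gt _ h1
            have : (q : ℕ) < t (2 * u + 2) := by
              rw [← hEq, hu] at hq3
              have : 2 * u + 1 + 1 = 2 * u + 2 := by ring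
              rwa [this] at hq3
            omega
          · rw [if_neg hc]; exact h3
        have := hdec u hul i hta htb h3
        rw [hf]; simp only [hin, hin1, dif_pos]
        exact this
      have := chainDec f (q : ℕ) (p : ℕ) hpq hstep
      rwa [hfp, hfq] at this
  -- order characterization
  have hC : ∀ p q : Fin n, p < q ↔ (runL t l (p : ℕ) < runL t l (q : ℕ) ∨
      (runL t l (p : ℕ) = runL t l (q : ℕ) ∧
        ((Even (runL t l (p : ℕ)) ∧ σ p < σ q) ∨ (¬ Even (runL t l (p : ℕ)) ∧ σ q < σ p)))) := by
    intro p q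
    constructor
    · intro hpq
      have hpq' : (p : ℕ) < (q : ℕ) := hpq
      have hle' : runL t l (p : ℕ) ≤ runL t l (q : ℕ) := runL_mono (le_of_lt hpq')
      rcases eq_or_lt_of_le hle' with h | h
      · right
        refine ⟨h, ?_⟩
        by_cases hev : Even (runL t l (p : ℕ))
        · exact Or.inl ⟨hev, (hB p q hpq' h).1 hev⟩
        · exact Or.inr ⟨hev, (hB p q hpq' h).2 hev⟩
      · exact Or.inl h
    · intro h
      rcases h with h | ⟨hEq, h⟩
      · by_contra hc
        push_neg at hc
        have : runL t l (q : ℕ) ≤ runL t l (p : ℕ) := runL_mono (Fin.le_iff_val_le_val.mp hc)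
        omega
      · by_contra hc
        push_neg at hc
        rcases eq_or_lt_of_le hc with he | hlt'
        · -- q = p
          subst he
          rcases h with ⟨_, h2⟩ | ⟨_, h2⟩ <;> exact absurd h2 (lt_irrefl _)
        · have hqp : (q : ℕ) < (p : ℕ) := hlt'
          have hB' := hB q p hqp hEq.symm
          rcases h with ⟨hev, h2⟩ | ⟨hev, h2⟩
          · have := hB'.1 (hEq ▸ hev)
            exact absurd h2 (not_lt_of_gt this)
          · have := hB'.2 (by rwa [hEq] at hev)
            exact absurd h2 (not_lt_of_gt this)
  -- now the counting
  have e1 : (Finset.univ.filter (fun w : Fin n =>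
      g w < g v ∨ (g w = g v ∧ ((Even (g w) ∧ w < v) ∨ (¬ Even (g w) ∧ v < w)))))
      = Finset.univ.filter (fun w : Fin n => σ.symm w < σ.symm v) := by
    ext w
    simp only [mem_filter, mem_univ, true_and]
    have hiff := hC (σ.symm w) (σ.symm v)
    rw [Equiv.apply_symm_apply, Equiv.apply_symm_apply] at hiff
    rw [hg w, hg v]
    exact hiff.symm
  have e2 : Finset.univ.filter (fun w : Fin n => σ.symm w < σ.symm v)
      = (Finset.univ.filter (fun p : Fin n => p < σ.symm v)).image σ := by
    ext w
    simp only [mem_filter, mem_univ, true_and, mem_image]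
    constructor
    · intro h; exact ⟨σ.symm w, h, by simp⟩
    · rintro ⟨p, hp, rfl⟩; simpa using hp
  have e3 : (Finset.univ.filter (fun p : Fin n => p < σ.symm v)) = Finset.Iio (σ.symm v) := by
    ext p; simp [Finset.mem_Iio]
  rw [e1, e2, Finset.card_image_of_injective _ σ.injective, e3, Fin.card_Iio]

private lemma inj_aux {n l : ℕ} (hn : 2 ≤ n) (hl : 1 ≤ l)
    (σ τ : Equiv.Perm (Fin n)) (t t' : ℕ → ℕ)
    (hσ0 : σ.symm ⟨0, by have := hl; omega⟩ = ⟨0, by have := hl; omega⟩)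
    (hτ0 : τ.symm ⟨0, by have := hl; omega⟩ = ⟨0, by have := hl; omega⟩)
    (ht0 : t 0 = 0) (ht'0 : t' 0 = 0)
    (hmono : ∀ a b : ℕ, a < b → b < 2 * l → t a < t b)
    (hmono' : ∀ a b : ℕ, a < b → b < 2 * l → t' a < t' b)
    (hinc : ∀ u : ℕ, ∀ hu : u < l, ∀ i : ℕ, ∀ h1 : t (2 * u) ≤ i, ∀ h2 : i < t (2 * u + 1),
      ∀ h3 : i < n - 1, σ ⟨i, by omega⟩ < σ ⟨i + 1, by omega⟩)
    (hdec : ∀ u : ℕ, ∀ hu : u < l, ∀ i : ℕ, ∀ h1 : t (2 * u + 1) ≤ i,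
      ∀ h2 : i < (if u + 1 < l then t (2 * u + 2) else n - 1),
      ∀ h3 : i < n - 1, σ ⟨i + 1, by omega⟩ < σ ⟨i, by omega⟩)
    (hinc' : ∀ u : ℕ, ∀ hu : u < l, ∀ i : ℕ, ∀ h1 : t' (2 * u) ≤ i, ∀ h2 : i < t' (2 * u + 1),
      ∀ h3 : i < n - 1, τ ⟨i, by omega⟩ < τ ⟨i + 1, by omega⟩)
    (hdec' : ∀ u : ℕ, ∀ hu : u < l, ∀ i : ℕ, ∀ h1 : t' (2 * u + 1) ≤ i,
      ∀ h2 : i < (if u + 1 < l then t' (2 * u + 2) else n - 1),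
      ∀ h3 : i < n - 1, τ ⟨i + 1, by omega⟩ < τ ⟨i, by omega⟩)
    (hxy : ∀ i : Fin (n - 1),
      runL t l ((σ.symm ⟨i.val + 1, by have := i.isLt; omega⟩ : Fin n) : ℕ)
      = runL t' l ((τ.symm ⟨i.val + 1, by have := i.isLt; omega⟩ : Fin n) : ℕ)) :
    σ = τ := by
  have hgy : ∀ w : Fin n,
      runL t l ((σ.symm w : Fin n) : ℕ) = runL t' l ((τ.symm w : Fin n) : ℕ) := by
    intro w
    rcases Nat.eq_zero_or_pos (w : ℕ) with hw | hw
    · have hwe : w = ⟨0, by omega⟩ := Fin.ext hw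
      rw [hwe, hσ0, hτ0]
      show runL t l 0 = runL t' l 0
      rw [runL_zero hl ht0 hmono, runL_zero hl ht'0 hmono']
    · have hi : (w : ℕ) - 1 < n - 1 := by have := w.isLt; omega
      have hwe : w = ⟨((⟨(w : ℕ) - 1, hi⟩ : Fin (n - 1)) : ℕ) + 1, by omega⟩ := by
        apply Fin.ext; simp; omega
      rw [hwe]
      exact hxy ⟨(w : ℕ) - 1, hi⟩
  have hsymm : σ.symm = τ.symm := by
    apply Equiv.ext
    intro v
    apply Fin.ext
    rw [key hl σ t ht0 hmono hinc hdec
          (fun w : Fin n => runL t l ((σ.symm w : Fin n) : ℕ)) (fun w => rfl) v,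
        key hl τ t' ht'0 hmono' hinc' hdec'
          (fun w : Fin n => runL t l ((σ.symm w : Fin n) : ℕ)) (fun w => hgy w) v]
  have := congrArg Equiv.symm hsymm
  simpa using this

set_option maxHeartbeats 1000000 in
/-- For n ≥ 2 and l ≥ 1, the number of permutations σ ∈ S_n with σ(1)=1
having 2l alternating runs in the cyclic sense (indices 1=t_1<t_2<···<t_{2l}≤n such
that σ increases on each [t_{2u-1},t_{2u}] and decreases on each [t_{2u},t_{2u+1}],
cyclically) is at most (2l)^(n-1).  (0-indexed formulation: t 0 = 0, and the final
decreasing run goes from t(2l-1) to position n-1.) -/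
theorem stmt2 (n l : ℕ) (hn : 2 ≤ n) (hl : 1 ≤ l) :
    Nat.card {σ : Equiv.Perm (Fin n) //
      σ ⟨0, by omega⟩ = ⟨0, by omega⟩ ∧
      ∃ t : ℕ → ℕ, t 0 = 0 ∧
        (∀ a b : ℕ, a < b → b < 2 * l → t a < t b) ∧
        (∀ a : ℕ, a < 2 * l → t a ≤ n - 1) ∧
        (∀ u : ℕ, ∀ hu : u < l, ∀ i : ℕ, ∀ h1 : t (2 * u) ≤ i, ∀ h2 : i < t (2 * u + 1),
          ∀ h3 : i < n - 1, σ ⟨i, by omega⟩ < σ ⟨i + 1, by omega⟩) ∧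
        (∀ u : ℕ, ∀ hu : u < l, ∀ i : ℕ, ∀ h1 : t (2 * u + 1) ≤ i,
          ∀ h2 : i < (if u + 1 < l then t (2 * u + 2) else n - 1),
          ∀ h3 : i < n - 1, σ ⟨i + 1, by omega⟩ < σ ⟨i, by omega⟩)}
    ≤ (2 * l) ^ (n - 1) := by
  have hcard : Nat.card (Fin (n - 1) → Fin (2 * l)) = (2 * l) ^ (n - 1) := by
    rw [Nat.card_eq_fintype_card, Fintype.card_fun, Fintype.card_fin, Fintype.card_fin]
  refine le_of_le_of_eq
    (Nat.card_le_card_of_injective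
      (fun x => (fun i : Fin (n - 1) =>
        (⟨runL (Classical.choose x.2.2) l
            ((x.1.symm ⟨i.val + 1, by have := i.isLt; omega⟩ : Fin n) : ℕ),
          runL_lt hl _⟩ : Fin (2 * l)))) ?_) hcard
  intro x y hxy
  have hsx := Classical.choose_spec x.2.2
  have hsy := Classical.choose_spec y.2.2
  obtain ⟨htx0, htxmono, -, htxinc, htxdec⟩ := hsx
  obtain ⟨hty0, htymono, -, htyinc, htydec⟩ := hsy
  have hx0 : x.1.symm ⟨0, by omega⟩ = ⟨0, by omega⟩ := by
    rw [Equiv.symm_apply_eq]; exact x.2.1.symm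
  have hy0 : y.1.symm ⟨0, by omega⟩ = ⟨0, by omega⟩ := by
    rw [Equiv.symm_apply_eq]; exact y.2.1.symm
  exact Subtype.ext (inj_aux hn hl x.1 y.1 (Classical.choose x.2.2) (Classical.choose y.2.2)
    hx0 hy0 htx0 hty0 htxmono htymono htxinc htxdec htyinc htydec
    (fun i => congrArg Fin.val (congrFun hxy i)))
end

section
/- For each permutation σ ∈ S_n, the expansion of the rational function P(σ; λ_1,...,λ_n) = Π_{q=1}^n 1/(λ_{σ(q)} - λ_{σ(q+1)}) (with σ(n+1):=σ(1)) as a Laurent series in the region |λ_1| > ··· > |λ_n| is given by P(σ;λ_1,...,λ_n) = (-1)^{m(σ)} Σ_{j_1,...,j_n ≥ 0} Π_{q=1}^n λ_{σ(q)}^{J_{σ,q}(j_q) - J_{σ,q-1}(j_{q-1}) - 1}, where m(σ) is the number of cyclic descents of σ. -/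
open scoped BigOperators

/-- Number of cyclic descents m(σ) = card{q : σ(q+1) < σ(q)} (indices cyclic). -/
def cycDesc {n : ℕ} [NeZero n] (σ : Equiv.Perm (Fin n)) : ℕ :=
  (Finset.univ.filter fun q : Fin n => σ (q + 1) < σ q).card

/-- J_{σ,q}(j) = -j-1 if σ(q) < σ(q+1), and j if σ(q) > σ(q+1) (indices cyclic). -/
def Jfun {n : ℕ} [NeZero n] (σ : Equiv.Perm (Fin n)) (q : Fin n) (j : ℕ) : ℤ :=
  if σ q < σ (q + 1) then -(j : ℤ) - 1 else (j : ℤ)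

/-- Geometric series expansion of `(a-b)⁻¹` when `|b| < |a|`. -/
lemma geom_aux (a b : ℂ) (ha : a ≠ 0) (h : ‖b‖ < ‖a‖) :
    (Summable fun j : ℕ => ‖b ^ (j : ℤ) * a ^ (-(j : ℤ) - 1)‖) ∧
    (a - b)⁻¹ = ∑' j : ℕ, b ^ (j : ℤ) * a ^ (-(j : ℤ) - 1) := by
  have hna : 0 < ‖a‖ := norm_pos_iff.mpr ha
  have hr : ‖b / a‖ < 1 := by
    rw [norm_div, div_lt_one hna]
    exact h
  have key : ∀ j : ℕ, b ^ (j : ℤ) * a ^ (-(j : ℤ) - 1) = (b / a) ^ j * a⁻¹ := by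
    intro j
    rw [zpow_natCast, show (-(j : ℤ) - 1) = -((j + 1 : ℕ) : ℤ) by push_cast; ring,
      zpow_neg, zpow_natCast, pow_succ, mul_inv, div_pow]
    field_simp
  constructor
  · have : Summable fun j : ℕ => ‖b / a‖ ^ j * ‖a⁻¹‖ :=
      (summable_geometric_of_lt_one (norm_nonneg _) hr).mul_right _
    refine this.congr fun j => ?_
    rw [key j, norm_mul, norm_pow]
  · have h1 : (1 - b / a) * a = a - b := by field_simp
    calc (a - b)⁻¹ = ((1 - b / a) * a)⁻¹ := by rw [h1]
      _ = (1 - b / a)⁻¹ * a⁻¹ := by rw [mul_inv]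
      _ = (∑' j : ℕ, (b / a) ^ j) * a⁻¹ := by rw [tsum_geometric_of_norm_lt_one hr]
      _ = ∑' j : ℕ, (b / a) ^ j * a⁻¹ := (tsum_mul_right).symm
      _ = ∑' j : ℕ, b ^ (j : ℤ) * a ^ (-(j : ℤ) - 1) := tsum_congr fun j => (key j).symm

/-- A finite product of absolutely convergent series is the sum over tuples. -/
lemma prod_tsum_aux : ∀ (n : ℕ) (f : Fin n → ℕ → ℂ), (∀ i, Summable fun j => ‖f i j‖) →
    (Summable fun g : Fin n → ℕ => ‖∏ i, f i (g i)‖) ∧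
    (∏ i, ∑' j, f i j) = ∑' g : Fin n → ℕ, ∏ i, f i (g i) := by
  intro n
  induction n with
  | zero =>
    intro f hf
    constructor
    · exact Summable.of_finite
    · have : ∑' g : Fin 0 → ℕ, ∏ i, f i (g i)
          = ∏ i : Fin 0, f i ((fun _ => 0 : Fin 0 → ℕ) i) :=
        tsum_eq_single (fun _ => 0 : Fin 0 → ℕ)
          fun b hb => absurd (Subsingleton.elim b _) hb
      simp [this]
  | succ n ih =>
    intro f hf
    obtain ⟨hs, he⟩ := ih (fun i j => f i.succ j) (fun i => hf i.succ)
    set e : ℕ × (Fin n → ℕ) ≃ (Fin (n + 1) → ℕ) := Fin.consEquiv fun _ => ℕ with he'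
    have hkey : ∀ p : ℕ × (Fin n → ℕ),
        (∏ i : Fin (n + 1), f i (e p i)) = f 0 p.1 * ∏ i : Fin n, f i.succ (p.2 i) := by
      intro p
      rw [Fin.prod_univ_succ]
      simp [he', Fin.consEquiv]
    have hsum : Summable fun p : ℕ × (Fin n → ℕ) =>
        ‖f 0 p.1‖ * ‖∏ i : Fin n, f i.succ (p.2 i)‖ := by
      have := summable_mul_of_summable_norm (R := ℝ)
        (f := fun j : ℕ => ‖f 0 j‖) (g := fun g : Fin n → ℕ => ‖∏ i : Fin n, f i.succ (g i)‖)
        (by simpa using hf 0) (by simpa using hs)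
      exact this
    constructor
    · rw [← e.summable_iff]
      refine hsum.congr fun p => ?_
      simp only [Function.comp_apply]
      rw [hkey p, norm_mul]
    · calc ∏ i : Fin (n + 1), ∑' j, f i j
          = (∑' j, f 0 j) * ∏ i : Fin n, ∑' j, f i.succ j := Fin.prod_univ_succ _
        _ = (∑' j, f 0 j) * ∑' g : Fin n → ℕ, ∏ i : Fin n, f i.succ (g i) := by rw [he]
        _ = ∑' p : ℕ × (Fin n → ℕ), f 0 p.1 * ∏ i : Fin n, f i.succ (p.2 i) :=
            tsum_mul_tsum_of_summable_norm (hf 0) hs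
        _ = ∑' p : ℕ × (Fin n → ℕ), ∏ i : Fin (n + 1), f i (e p i) :=
            tsum_congr fun p => (hkey p).symm
        _ = ∑' g : Fin (n + 1) → ℕ, ∏ i, f i (g i) :=
            e.tsum_eq fun g => ∏ i, f i (g i)

/-- for σ ∈ S_n, in the region |λ_1| > ⋯ > |λ_n| (all nonzero), the
Laurent expansion of P(σ;λ) = ∏_q 1/(λ_{σ(q)} - λ_{σ(q+1)}) (cyclic indices) is
P(σ;λ) = (-1)^{m(σ)} Σ_{j_1,…,j_n ≥ 0} ∏_q λ_{σ(q)}^{J_{σ,q}(j_q) - J_{σ,q-1}(j_{q-1}) - 1}. -/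
theorem stmt4 (n : ℕ) [NeZero n] (σ : Equiv.Perm (Fin n)) (lam : Fin n → ℂ)
    (h0 : ∀ i, lam i ≠ 0)
    (hord : ∀ i j : Fin n, i < j → ‖lam j‖ < ‖lam i‖) :
    ∏ q : Fin n, (lam (σ q) - lam (σ (q + 1)))⁻¹
      = (-1) ^ cycDesc σ *
        ∑' j : Fin n → ℕ, ∏ q : Fin n,
          lam (σ q) ^ (Jfun σ q (j q) - Jfun σ (q - 1) (j (q - 1)) - 1) := by
  classical
  rcases eq_or_ne n 1 with h1 | h1
  · subst h1
    have hq : ∀ q : Fin 1, q + 1 = q := fun q => Subsingleton.elim _ _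
    have hL : ∏ q : Fin 1, (lam (σ q) - lam (σ (q + 1)))⁻¹ = 0 := by
      simp [hq]
    have hm : cycDesc σ = 0 := by
      simp [cycDesc, hq]
    have hc : ∀ j : Fin 1 → ℕ,
        (∏ q : Fin 1, lam (σ q) ^ (Jfun σ q (j q) - Jfun σ (q - 1) (j (q - 1)) - 1))
          = ∏ q : Fin 1, lam (σ q) ^ (-1 : ℤ) := by
      intro j
      refine Finset.prod_congr rfl fun q _ => ?_
      congr 1
      rw [Subsingleton.elim (q - 1) q]
      ring
    rw [hL, hm, tsum_congr hc, tsum_eq_zero_of_not_summable, mul_zero]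
    intro hsum
    have := (summable_const_iff (∏ q : Fin 1, lam (σ q) ^ (-1 : ℤ))).mp hsum
    exact (Finset.prod_ne_zero_iff.mpr fun q _ => zpow_ne_zero _ (h0 _)) this
  · have hn2 : 2 ≤ n := by
      have := NeZero.ne n
      omega
    have hne1 : ∀ q : Fin n, σ q ≠ σ (q + 1) := by
      intro q h
      have hq : q = q + 1 := σ.injective h
      have := congrArg (fun x : Fin n => x - q) hq
      simp at this
      omega
    set t : Fin n → ℕ → ℂ := fun q j =>
      lam (σ q) ^ (Jfun σ q j) * lam (σ (q + 1)) ^ (-(Jfun σ q j) - 1) with ht'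
    have key : ∀ q : Fin n, (Summable fun j => ‖t q j‖) ∧
        (lam (σ q) - lam (σ (q + 1)))⁻¹
          = (if σ q < σ (q + 1) then (1 : ℂ) else -1) * ∑' j, t q j := by
      intro q
      by_cases hlt : σ q < σ (q + 1)
      · obtain ⟨hs, he⟩ := geom_aux (lam (σ q)) (lam (σ (q + 1))) (h0 _) (hord _ _ hlt)
        have ht : ∀ j : ℕ, t q j = lam (σ (q + 1)) ^ (j : ℤ) * lam (σ q) ^ (-(j : ℤ) - 1) := by
          intro j
          simp only [ht', Jfun, if_pos hlt]
          rw [show -(-(j : ℤ) - 1) - 1 = (j : ℤ) by ring]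
          ring
        refine ⟨hs.congr fun j => by rw [ht j], ?_⟩
        rw [if_pos hlt, one_mul, he]
        exact tsum_congr fun j => (ht j).symm
      · have hlt' : σ (q + 1) < σ q := (not_lt.mp hlt).lt_of_ne (hne1 q).symm
        obtain ⟨hs, he⟩ := geom_aux (lam (σ (q + 1))) (lam (σ q)) (h0 _) (hord _ _ hlt')
        have ht : ∀ j : ℕ, t q j = lam (σ q) ^ (j : ℤ) * lam (σ (q + 1)) ^ (-(j : ℤ) - 1) := by
          intro j
          simp only [ht', Jfun, if_neg hlt]
        refine ⟨hs.congr fun j => by rw [ht j], ?_⟩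
        rw [if_neg hlt, ← neg_sub, inv_neg, he, neg_one_mul]
        congr 1
        exact tsum_congr fun j => (ht j).symm
    obtain ⟨hsum, heq⟩ := prod_tsum_aux n t fun q => (key q).1
    have hsign : (∏ q : Fin n, (if σ q < σ (q + 1) then (1 : ℂ) else -1))
        = (-1) ^ cycDesc σ := by
      rw [Finset.prod_ite, Finset.prod_const_one, one_mul, Finset.prod_const]
      congr 1
      unfold cycDesc
      congr 1
      refine Finset.filter_congr fun q _ => ?_
      constructor
      · intro h
        exact (not_lt.mp h).lt_of_ne (hne1 q).symm
      · intro h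
        exact not_lt.mpr h.le
    have hterm : ∀ g : Fin n → ℕ, ∏ q : Fin n, t q (g q)
        = ∏ q : Fin n, lam (σ q) ^ (Jfun σ q (g q) - Jfun σ (q - 1) (g (q - 1)) - 1) := by
      intro g
      have h2' : ∏ q : Fin n, lam (σ (q + 1)) ^ (-(Jfun σ q (g q)) - 1)
          = ∏ q : Fin n, lam (σ q) ^ (-(Jfun σ (q - 1) (g (q - 1))) - 1) := by
        rw [← Equiv.prod_comp (Equiv.addRight (1 : Fin n))
          (fun q : Fin n => lam (σ q) ^ (-(Jfun σ (q - 1) (g (q - 1))) - 1))]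
        refine Finset.prod_congr rfl fun q _ => ?_
        simp [Equiv.addRight, add_sub_cancel_right]
      calc ∏ q : Fin n, t q (g q)
          = (∏ q : Fin n, lam (σ q) ^ (Jfun σ q (g q)))
            * ∏ q : Fin n, lam (σ (q + 1)) ^ (-(Jfun σ q (g q)) - 1) := by
            rw [← Finset.prod_mul_distrib]
        _ = (∏ q : Fin n, lam (σ q) ^ (Jfun σ q (g q)))
            * ∏ q : Fin n, lam (σ q) ^ (-(Jfun σ (q - 1) (g (q - 1))) - 1) := by rw [h2']
        _ = ∏ q : Fin n, lam (σ q) ^ (Jfun σ q (g q) - Jfun σ (q - 1) (g (q - 1)) - 1) := by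
            rw [← Finset.prod_mul_distrib]
            refine Finset.prod_congr rfl fun q _ => ?_
            rw [← zpow_add₀ (h0 _)]
            congr 1
            ring
    calc ∏ q : Fin n, (lam (σ q) - lam (σ (q + 1)))⁻¹
        = ∏ q : Fin n, ((if σ q < σ (q + 1) then (1 : ℂ) else -1) * ∑' j, t q j) :=
          Finset.prod_congr rfl fun q _ => (key q).2
      _ = (∏ q : Fin n, (if σ q < σ (q + 1) then (1 : ℂ) else -1))
          * ∏ q : Fin n, ∑' j, t q j := Finset.prod_mul_distrib
      _ = (-1) ^ cycDesc σ * ∑' g : Fin n → ℕ, ∏ q : Fin n, t q (g q) := by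
          rw [hsign, heq]
      _ = (-1) ^ cycDesc σ * ∑' j : Fin n → ℕ, ∏ q : Fin n,
            lam (σ q) ^ (Jfun σ q (j q) - Jfun σ (q - 1) (j (q - 1)) - 1) := by
          rw [tsum_congr hterm]
end

section
/- With b_k as defined, the inequality |b_k| ≤ 2|b_{k+1}| holds for all integers k ≥ -1. -/
/-- The sequence b_k (k ≥ -1) from the paper:
b_{3g} = -(6g-1)!!/(24^g g!), b_{3g-1} = ((6g+1)/(6g-1))·(6g-1)!!/(24^g g!),
b_{3g-2} = (1/2)·(6g-5)!!/(24^{g-1} (g-1)!), with (-1)!! = 1. -/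
def bInt (k : ℤ) : ℚ :=
  if k % 3 = 0 then
    -((6 * (k / 3) - 1).toNat.doubleFactorial : ℚ)
      / (24 ^ (k / 3).toNat * ((k / 3).toNat.factorial : ℚ))
  else if k % 3 = 2 then
    ((6 * (((k + 1) / 3 : ℤ) : ℚ) + 1) / (6 * (((k + 1) / 3 : ℤ) : ℚ) - 1)) *
      (((6 * ((k + 1) / 3) - 1).toNat.doubleFactorial : ℚ)
        / (24 ^ ((k + 1) / 3).toNat * (((k + 1) / 3).toNat.factorial : ℚ)))
  else
    (1 / 2 : ℚ) * (((6 * ((k + 2) / 3) - 5).toNat.doubleFactorial : ℚ)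
      / (24 ^ ((k + 2) / 3 - 1).toNat * (((k + 2) / 3 - 1).toNat.factorial : ℚ)))

lemma hb0 (g : ℕ) : bInt (3 * g) =
    -((6 * g - 1).doubleFactorial : ℚ) / (24 ^ g * (g.factorial : ℚ)) := by
  have h1 : (3 * (g:ℤ)) % 3 = 0 := by omega
  have h2 : (3 * (g:ℤ)) / 3 = g := by omega
  have h3 : (6 * (g:ℤ) - 1).toNat = 6 * g - 1 := by omega
  have h4 : ((g:ℤ)).toNat = g := by omega
  simp only [bInt, h1, if_pos rfl, h2, h3, h4]
  norm_num

lemma hb2 (g : ℕ) : bInt (3 * g - 1) =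
    ((6 * (g:ℚ) + 1) / (6 * (g:ℚ) - 1)) *
      (((6 * g - 1).doubleFactorial : ℚ) / (24 ^ g * (g.factorial : ℚ))) := by
  have h1 : (3 * (g:ℤ) - 1) % 3 = 2 := by omega
  have h0 : ¬ (3 * (g:ℤ) - 1) % 3 = 0 := by omega
  have h2 : (3 * (g:ℤ) - 1 + 1) / 3 = g := by omega
  have h3 : (6 * (g:ℤ) - 1).toNat = 6 * g - 1 := by omega
  have h4 : ((g:ℤ)).toNat = g := by omega
  simp only [bInt, if_neg h0, h1, if_pos rfl, h2, h3, h4, Int.cast_natCast]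
  norm_num

lemma hb1 (g : ℕ) : bInt (3 * g + 1) =
    (1 / 2 : ℚ) * (((6 * g + 1).doubleFactorial : ℚ) / (24 ^ g * (g.factorial : ℚ))) := by
  have h0 : ¬ (3 * (g:ℤ) + 1) % 3 = 0 := by omega
  have h2' : ¬ (3 * (g:ℤ) + 1) % 3 = 2 := by omega
  have h2 : (3 * (g:ℤ) + 1 + 2) / 3 = g + 1 := by omega
  have h3 : (6 * ((g:ℤ) + 1) - 5).toNat = 6 * g + 1 := by omega
  have h4 : ((g:ℤ) + 1 - 1).toNat = g := by omega
  simp only [bInt, if_neg h0, if_neg h2', h2, h3, h4]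

lemma df_step (g : ℕ) :
    (6 * g + 1).doubleFactorial = (6 * g + 1) * (6 * g - 1).doubleFactorial := by
  cases g with
  | zero => rfl
  | succ s =>
    have h : 6 * (s + 1) + 1 = (6 * s + 5) + 2 := by ring
    have h2 : 6 * (s + 1) - 1 = 6 * s + 5 := by omega
    rw [h, h2, Nat.doubleFactorial_add_two]

lemma df_step2 (g : ℕ) :
    (6 * (g + 1) - 1).doubleFactorial
      = (6 * g + 5) * ((6 * g + 3) * (6 * g + 1).doubleFactorial) := by
  have h : 6 * (g + 1) - 1 = (6 * g + 3) + 2 := by omega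
  have h2 : 6 * g + 3 = (6 * g + 1) + 2 := by ring
  rw [h, Nat.doubleFactorial_add_two, h2, Nat.doubleFactorial_add_two, ← h2]

/-- |b_k| ≤ 2|b_{k+1}| for all integers k ≥ -1. -/
theorem stmt7 (k : ℤ) (hk : -1 ≤ k) : |bInt k| ≤ 2 * |bInt (k + 1)| := by
  have h3 : k % 3 = 0 ∨ k % 3 = 1 ∨ k % 3 = 2 := by omega
  rcases h3 with h | h | h
  · -- k = 3g, k+1 = 3g+1
    obtain ⟨g, hg⟩ : ∃ g : ℕ, k = 3 * (g:ℤ) := ⟨(k / 3).toNat, by omega⟩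
    rw [hg, hb0, show 3 * (g:ℤ) + 1 = 3 * ((g:ℕ):ℤ) + 1 from rfl, hb1]
    have hDpos : (0:ℚ) < ((6 * g - 1).doubleFactorial : ℚ) := by positivity
    have hEpos : (0:ℚ) < 24 ^ g * (g.factorial : ℚ) := by positivity
    rw [neg_div, abs_neg, abs_of_nonneg (by positivity), abs_of_nonneg (by positivity),
      df_step]
    push_cast
    rw [div_le_iff₀ hEpos]
    have heq : 2 * (1/2 * ((6*(g:ℚ)+1) * ((6 * g - 1).doubleFactorial : ℚ)
        / (24 ^ g * (g.factorial : ℚ)))) * (24 ^ g * (g.factorial : ℚ))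
        = (6*(g:ℚ)+1) * ((6 * g - 1).doubleFactorial : ℚ) := by
      field_simp
    rw [heq]
    have hn : (0:ℚ) ≤ (g:ℚ) := by positivity
    nlinarith
  · -- k = 3g+1, k+1 = 3(g+1)-1
    obtain ⟨g, hg⟩ : ∃ g : ℕ, k = 3 * (g:ℤ) + 1 := ⟨(k / 3).toNat, by omega⟩
    rw [hg, hb1, show 3 * (g:ℤ) + 1 + 1 = 3 * (((g:ℕ)+1:ℕ):ℤ) - 1 by push_cast; ring,
      hb2]
    have hDpos : (0:ℚ) < ((6 * g + 1).doubleFactorial : ℚ) := by positivity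
    have hEpos : (0:ℚ) < 24 ^ g * (g.factorial : ℚ) := by positivity
    have hn : (0:ℚ) ≤ (g:ℚ) := by positivity
    rw [df_step2, Nat.factorial_succ, pow_succ]
    push_cast
    set n : ℚ := (g:ℚ) with hnn
    set D : ℚ := ((6 * g + 1).doubleFactorial : ℚ) with hDD
    set E : ℚ := 24 ^ g * (g.factorial : ℚ) with hEE
    have h5 : (0:ℚ) < 6 * n + 5 := by positivity
    have h61 : (0:ℚ) < 6 * (n + 1) - 1 := by nlinarith
    have hrw : (6 * (n+1) + 1) / (6 * (n+1) - 1) *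
        ((6 * n + 5) * ((6 * n + 3) * D) / (24 ^ g * 24 * ((n + 1) * g.factorial)))
        = ((6 * n + 7) * (6 * n + 3) / (24 * (n + 1))) * (D / E) := by
      rw [hEE]
      have : 6 * (n+1) - 1 = 6 * n + 5 := by ring
      rw [this]
      have hne : (n:ℚ) + 1 ≠ 0 := by positivity
      field_simp
      ring
    rw [abs_of_nonneg (by positivity), hrw]
    rw [abs_of_nonneg (by positivity)]
    rw [← mul_assoc]
    have hkey : (1/2 : ℚ) ≤ 2 * ((6 * n + 7) * (6 * n + 3) / (24 * (n + 1))) := by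
      rw [mul_div_assoc', le_div_iff₀ (by positivity)]
      nlinarith
    exact mul_le_mul_of_nonneg_right hkey (by positivity)
  · -- k = 3g-1, k+1 = 3g
    obtain ⟨g, hg⟩ : ∃ g : ℕ, k = 3 * (g:ℤ) - 1 := ⟨((k+1) / 3).toNat, by omega⟩
    rw [hg, hb2, show 3 * (g:ℤ) - 1 + 1 = 3 * ((g:ℕ):ℤ) by push_cast; ring, hb0]
    rcases g with _ | s
    · norm_num [Nat.doubleFactorial]
    · have hDpos : (0:ℚ) < ((6 * (s+1) - 1).doubleFactorial : ℚ) := by positivity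
      have hEpos : (0:ℚ) < 24 ^ (s+1) * ((s+1).factorial : ℚ) := by positivity
      have hs : (0:ℚ) ≤ (s:ℚ) := by positivity
      push_cast
      have h61 : (0:ℚ) < 6 * ((s:ℚ) + 1) - 1 := by nlinarith
      rw [neg_div, abs_neg, abs_of_nonneg (by positivity),
        abs_of_nonneg (by positivity)]
      have hkey : (6 * ((s:ℚ)+1) + 1) / (6 * ((s:ℚ)+1) - 1) ≤ 2 := by
        rw [div_le_iff₀ h61]; nlinarith
      calc (6 * ((s:ℚ)+1) + 1) / (6 * ((s:ℚ)+1) - 1) *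
            (((6 * (s+1) - 1).doubleFactorial : ℚ) / (24 ^ (s+1) * ((s+1).factorial : ℚ)))
          ≤ 2 * (((6 * (s+1) - 1).doubleFactorial : ℚ) / (24 ^ (s+1) * ((s+1).factorial : ℚ))) :=
            mul_le_mul_of_nonneg_right hkey (by positivity)
        _ = _ := by norm_num
end

section
/- Define c_k := b_k·(k+2)² for k ≥ -1, where b_k is as defined. Then the sequence (|c_k|)_{k≥0} is strictly increasing, and moreover for all ℓ ≥ 2 and k ≥ 0 one has |c_{k+ℓ+3}/c_{k+ℓ}| ≥ |c_{k+3}/c_k|. -/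
/-- c_k := b_k · (k+2)² for k ≥ -1. -/
def cInt (k : ℤ) : ℚ := bInt k * ((k : ℚ) + 2) ^ 2

def Mq (g : ℕ) : ℚ := ((6*g-1 : ℕ).doubleFactorial : ℚ) / (24 ^ g * (g.factorial : ℚ))

lemma Mq_pos (g : ℕ) : 0 < Mq g := by
  unfold Mq
  have := Nat.doubleFactorial_pos (6*g-1)
  have := Nat.factorial_pos g
  positivity

lemma df1 (g : ℕ) : (6*g+1 : ℕ).doubleFactorial = (6*g+1) * (6*g-1 : ℕ).doubleFactorial := by
  cases g with
  | zero => decide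
  | succ n =>
    have h1 : 6*(n+1)+1 = (6*n+5)+2 := by omega
    have h2 : 6*(n+1)-1 = 6*n+5 := by omega
    rw [h1, h2, Nat.doubleFactorial_add_two]

lemma df5 (g : ℕ) : (6*g+5 : ℕ).doubleFactorial
    = (6*g+5) * ((6*g+3) * ((6*g+1) * (6*g-1 : ℕ).doubleFactorial)) := by
  have h1 : 6*g+5 = (6*g+3)+2 := by omega
  have h2 : 6*g+3 = (6*g+1)+2 := by omega
  rw [h1, Nat.doubleFactorial_add_two, ← h1, h2, Nat.doubleFactorial_add_two, ← h2, df1]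

lemma Mq_rec (g : ℕ) : Mq (g+1)
    = Mq g * (((6*(g:ℚ)+1) * (6*(g:ℚ)+3) * (6*(g:ℚ)+5)) / (24*((g:ℚ)+1))) := by
  unfold Mq
  have h : 6*(g+1)-1 = 6*g+5 := by omega
  rw [h, df5, Nat.factorial_succ]
  have h1 : (24:ℚ)^g ≠ 0 := by positivity
  have h2 : ((g.factorial : ℚ)) ≠ 0 := by exact_mod_cast g.factorial_pos.ne'
  have h3 : ((g:ℚ)+1) ≠ 0 := by positivity
  push_cast
  field_simp
  ring

lemma c0 (g : ℕ) : cInt (3*g) = -(Mq g * (3*(g:ℚ)+2)^2) := by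
  unfold cInt bInt Mq
  have e1 : (3*(g:ℤ)) % 3 = 0 := by omega
  have e2 : (3*(g:ℤ)) / 3 = g := by omega
  rw [if_pos e1, e2]
  have e3 : (6*(g:ℤ)-1).toNat = 6*g-1 := by omega
  have e4 : ((g:ℤ)).toNat = g := by omega
  rw [e3, e4]
  push_cast
  ring

lemma c1 (g : ℕ) : cInt (3*g+1)
    = Mq g * ((9/2) * (6*(g:ℚ)+1) * ((g:ℚ)+1)^2) := by
  unfold cInt bInt Mq
  have e1 : ¬ ((3*(g:ℤ)+1) % 3 = 0) := by omega
  have e2 : ¬ ((3*(g:ℤ)+1) % 3 = 2) := by omega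
  rw [if_neg e1, if_neg e2]
  have e3 : (3*(g:ℤ)+1+2) / 3 = (g:ℤ)+1 := by omega
  rw [e3]
  have e4 : (6*((g:ℤ)+1)-5).toNat = 6*g+1 := by omega
  have e5 : ((g:ℤ)+1-1).toNat = g := by omega
  rw [e4, e5, df1]
  push_cast
  ring

lemma c2 (g : ℕ) : cInt (3*g+2)
    = Mq g * ((6*(g:ℚ)+7) * (6*(g:ℚ)+3) * (6*(g:ℚ)+1) * (3*(g:ℚ)+4)^2 / (24*((g:ℚ)+1))) := by
  unfold cInt bInt Mq
  have e1 : ¬ ((3*(g:ℤ)+2) % 3 = 0) := by omega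
  have e2 : (3*(g:ℤ)+2) % 3 = 2 := by omega
  rw [if_neg e1, if_pos e2]
  have e3 : (3*(g:ℤ)+2+1) / 3 = (g:ℤ)+1 := by omega
  rw [e3]
  have e4 : (6*((g:ℤ)+1)-1).toNat = 6*g+5 := by omega
  have e5 : ((g:ℤ)+1).toNat = g+1 := by omega
  rw [e4, e5, df5, Nat.factorial_succ]
  have h1 : (24:ℚ)^g ≠ 0 := by positivity
  have h2 : ((g.factorial : ℚ)) ≠ 0 := by exact_mod_cast g.factorial_pos.ne'
  have h3 : ((g:ℚ)+1) ≠ 0 := by positivity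
  have h4 : (6*((g:ℚ)+1)-1) ≠ 0 := by
    have : (0:ℚ) ≤ g := by positivity
    nlinarith
  have h5 : (24:ℚ)^(g+1) ≠ 0 := by positivity
  push_cast
  field_simp
  ring

lemma a0 (g : ℕ) : |cInt (3*g)| = Mq g * (3*(g:ℚ)+2)^2 := by
  rw [c0, abs_neg, abs_of_pos (mul_pos (Mq_pos g) (by positivity))]

lemma a1 (g : ℕ) : |cInt (3*g+1)| = Mq g * ((9/2) * (6*(g:ℚ)+1) * ((g:ℚ)+1)^2) := by
  rw [c1, abs_of_pos (mul_pos (Mq_pos g) (by positivity))]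

lemma a2 (g : ℕ) : |cInt (3*g+2)|
    = Mq g * ((6*(g:ℚ)+7) * (6*(g:ℚ)+3) * (6*(g:ℚ)+1) * (3*(g:ℚ)+4)^2 / (24*((g:ℚ)+1))) := by
  rw [c2, abs_of_pos (mul_pos (Mq_pos g) (by positivity))]

lemma r0 (g : ℕ) : |cInt (3*(g:ℤ)+3) / cInt (3*(g:ℤ))|
    = ((6*(g:ℚ)+1)*(6*(g:ℚ)+3)*(6*(g:ℚ)+5)*(3*(g:ℚ)+5)^2) / (24*((g:ℚ)+1)*(3*(g:ℚ)+2)^2) := by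
  rw [abs_div]
  rw [show (3*(g:ℤ)+3) = 3*((g+1:ℕ):ℤ) from by push_cast; ring]
  rw [a0 (g+1), a0 g, Mq_rec]
  have hM := (Mq_pos g).ne'
  have h1 : ((g:ℚ)+1) ≠ 0 := by positivity
  have h2 : (3*(g:ℚ)+2) ≠ 0 := by positivity
  push_cast
  field_simp
  ring

lemma r1 (g : ℕ) : |cInt (3*(g:ℤ)+4) / cInt (3*(g:ℤ)+1)|
    = ((6*(g:ℚ)+3)*(6*(g:ℚ)+5)*(6*(g:ℚ)+7)*((g:ℚ)+2)^2) / (24*((g:ℚ)+1)^3) := by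
  rw [abs_div]
  rw [show (3*(g:ℤ)+4) = 3*((g+1:ℕ):ℤ)+1 from by push_cast; ring]
  rw [a1 (g+1), a1 g, Mq_rec]
  have hM := (Mq_pos g).ne'
  have h1 : ((g:ℚ)+1) ≠ 0 := by positivity
  have h3 : (6*(g:ℚ)+1) ≠ 0 := by positivity
  push_cast
  field_simp
  ring

lemma r2 (g : ℕ) : |cInt (3*(g:ℤ)+5) / cInt (3*(g:ℤ)+2)|
    = ((6*(g:ℚ)+5)*(6*(g:ℚ)+9)*(6*(g:ℚ)+13)*(3*(g:ℚ)+7)^2) / (24*((g:ℚ)+2)*(3*(g:ℚ)+4)^2) := by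
  rw [abs_div]
  rw [show (3*(g:ℤ)+5) = 3*((g+1:ℕ):ℤ)+2 from by push_cast; ring]
  rw [a2 (g+1), a2 g, Mq_rec]
  have hM := (Mq_pos g).ne'
  have h1 : ((g:ℚ)+1) ≠ 0 := by positivity
  have h2 : ((g:ℚ)+2) ≠ 0 := by positivity
  have h3 : (6*(g:ℚ)+1) ≠ 0 := by positivity
  have h4 : (6*(g:ℚ)+3) ≠ 0 := by positivity
  have h5 : (6*(g:ℚ)+7) ≠ 0 := by positivity
  have h6 : (3*(g:ℚ)+4) ≠ 0 := by positivity
  push_cast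
  field_simp
  ring

lemma q30 (g : ℕ) : |cInt (3*(g:ℤ)+3) / cInt (3*(g:ℤ))| ≤ |cInt (3*(g:ℤ)+6) / cInt (3*(g:ℤ)+3)| := by
  rw [r0 g]
  rw [show (3*(g:ℤ)+6) = 3*((g+1:ℕ):ℤ)+3 from by push_cast; ring,
      show (3*(g:ℤ)+3) = 3*((g+1:ℕ):ℤ) from by push_cast; ring, r0 (g+1)]
  push_cast
  rw [div_le_div_iff₀ (by positivity) (by positivity)]
  have h : (0:ℚ) ≤ 3807792 + 23590008*(g:ℚ) + 60309360*(g:ℚ)^2 + 82906416*(g:ℚ)^3 + 66459528*(g:ℚ)^4 + 31142880*(g:ℚ)^5 + 7908192*(g:ℚ)^6 + 839808*(g:ℚ)^7 := by positivity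
  linarith

lemma q31 (g : ℕ) : |cInt (3*(g:ℤ)+4) / cInt (3*(g:ℤ)+1)| ≤ |cInt (3*(g:ℤ)+7) / cInt (3*(g:ℤ)+4)| := by
  rw [r1 g]
  rw [show (3*(g:ℤ)+7) = 3*((g+1:ℕ):ℤ)+4 from by push_cast; ring,
      show (3*(g:ℤ)+4) = 3*((g+1:ℕ):ℤ)+1 from by push_cast; ring, r1 (g+1)]
  push_cast
  rw [div_le_div_iff₀ (by positivity) (by positivity)]
  have h : (0:ℚ) ≤ 197352 + 955800*(g:ℚ) + 1949184*(g:ℚ)^2 + 2170800*(g:ℚ)^3 + 1425816*(g:ℚ)^4 + 552096*(g:ℚ)^5 + 116640*(g:ℚ)^6 + 10368*(g:ℚ)^7 := by positivity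
  linarith

lemma q32 (g : ℕ) : |cInt (3*(g:ℤ)+5) / cInt (3*(g:ℤ)+2)| ≤ |cInt (3*(g:ℤ)+8) / cInt (3*(g:ℤ)+5)| := by
  rw [r2 g]
  rw [show (3*(g:ℤ)+8) = 3*((g+1:ℕ):ℤ)+5 from by push_cast; ring,
      show (3*(g:ℤ)+5) = 3*((g+1:ℕ):ℤ)+2 from by push_cast; ring, r2 (g+1)]
  push_cast
  rw [div_le_div_iff₀ (by positivity) (by positivity)]
  have h : (0:ℚ) ≤ 139637880 + 487136376*(g:ℚ) + 721164384*(g:ℚ)^2 + 586604592*(g:ℚ)^3 + 282888936*(g:ℚ)^4 + 80831520*(g:ℚ)^5 + 12667104*(g:ℚ)^6 + 839808*(g:ℚ)^7 := by positivity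
  linarith

lemma q20 (g : ℕ) : |cInt (3*(g:ℤ)+3) / cInt (3*(g:ℤ))| ≤ |cInt (3*(g:ℤ)+5) / cInt (3*(g:ℤ)+2)| := by
  rw [r0 g, r2 g]
  rw [div_le_div_iff₀ (by positivity) (by positivity)]
  have h : (0:ℚ) ≤ 2463840 + 16201728*(g:ℚ) + 44206344*(g:ℚ)^2 + 65013840*(g:ℚ)^3 + 55705320*(g:ℚ)^4 + 27806976*(g:ℚ)^5 + 7488288*(g:ℚ)^6 + 839808*(g:ℚ)^7 := by positivity
  linarith

lemma q21 (g : ℕ) : |cInt (3*(g:ℤ)+4) / cInt (3*(g:ℤ)+1)| ≤ |cInt (3*(g:ℤ)+6) / cInt (3*(g:ℤ)+3)| := by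
  rw [r1 g]
  rw [show (3*(g:ℤ)+6) = 3*((g+1:ℕ):ℤ)+3 from by push_cast; ring,
      show (3*(g:ℤ)+3) = 3*((g+1:ℕ):ℤ) from by push_cast; ring, r0 (g+1)]
  push_cast
  rw [div_le_div_iff₀ (by positivity) (by positivity)]
  have h : (0:ℚ) ≤ 560448 + 2788704*(g:ℚ) + 5911272*(g:ℚ)^2 + 6938208*(g:ℚ)^3 + 4873608*(g:ℚ)^4 + 2046384*(g:ℚ)^5 + 474336*(g:ℚ)^6 + 46656*(g:ℚ)^7 := by positivity
  linarith

lemma q22 (g : ℕ) : |cInt (3*(g:ℤ)+5) / cInt (3*(g:ℤ)+2)| ≤ |cInt (3*(g:ℤ)+7) / cInt (3*(g:ℤ)+4)| := by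
  rw [r2 g]
  rw [show (3*(g:ℤ)+7) = 3*((g+1:ℕ):ℤ)+4 from by push_cast; ring,
      show (3*(g:ℤ)+4) = 3*((g+1:ℕ):ℤ)+1 from by push_cast; ring, r1 (g+1)]
  push_cast
  rw [div_le_div_iff₀ (by positivity) (by positivity)]
  have h : (0:ℚ) ≤ 3392064 + 12823776*(g:ℚ) + 20875968*(g:ℚ)^2 + 18931248*(g:ℚ)^3 + 10305792*(g:ℚ)^4 + 3360528*(g:ℚ)^5 + 606528*(g:ℚ)^6 + 46656*(g:ℚ)^7 := by positivity
  linarith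

lemma mono (k : ℤ) (hk : 0 ≤ k) : |cInt k| < |cInt (k+1)| := by
  obtain ⟨n, rfl⟩ := Int.eq_ofNat_of_zero_le hk
  rcases (show n % 3 = 0 ∨ n % 3 = 1 ∨ n % 3 = 2 by omega) with h|h|h
  · set g := n / 3 with hg
    rw [show (n:ℤ) = 3*(g:ℤ) from by omega, a0 g, a1 g]
    have hM := Mq_pos g
    have key : (3*(g:ℚ)+2)^2 < (9/2) * (6*(g:ℚ)+1) * ((g:ℚ)+1)^2 := by
      have h1 : (0:ℚ) < (1/2) + 24*(g:ℚ) + (99/2)*(g:ℚ)^2 + 27*(g:ℚ)^3 := by positivity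
      linarith
    exact mul_lt_mul_of_pos_left key hM
  · set g := n / 3 with hg
    rw [show (n:ℤ) = 3*(g:ℤ)+1 from by omega, a1 g,
        show (3*(g:ℤ)+1+1) = 3*(g:ℤ)+2 from by ring, a2 g]
    have hM := Mq_pos g
    have key : (9/2) * (6*(g:ℚ)+1) * ((g:ℚ)+1)^2
        < (6*(g:ℚ)+7) * (6*(g:ℚ)+3) * (6*(g:ℚ)+1) * (3*(g:ℚ)+4)^2 / (24*((g:ℚ)+1)) := by
      rw [lt_div_iff₀ (by positivity)]
      have h1 : (0:ℚ) < 228 + 2508*(g:ℚ) + 8721*(g:ℚ)^2 + 12582*(g:ℚ)^3 + 8100*(g:ℚ)^4 + 1944*(g:ℚ)^5 := by positivity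
      linarith
    exact mul_lt_mul_of_pos_left key hM
  · set g := n / 3 with hg
    rw [show (n:ℤ) = 3*(g:ℤ)+2 from by omega, a2 g,
        show (3*(g:ℤ)+2+1) = 3*((g+1:ℕ):ℤ) from by push_cast; ring, a0 (g+1), Mq_rec]
    have hM := Mq_pos g
    have key : (6*(g:ℚ)+7) * (6*(g:ℚ)+3) * (6*(g:ℚ)+1) * (3*(g:ℚ)+4)^2 / (24*((g:ℚ)+1))
        < ((6*(g:ℚ)+1) * (6*(g:ℚ)+3) * (6*(g:ℚ)+5) / (24*((g:ℚ)+1))) * (3*((g+1:ℕ):ℚ)+2)^2 := by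
      push_cast
      rw [div_mul_eq_mul_div, div_lt_div_iff₀ (by positivity) (by positivity)]
      have h1 : (0:ℚ) < 936 + 11016*(g:ℚ) + 43344*(g:ℚ)^2 + 74736*(g:ℚ)^3 + 57024*(g:ℚ)^4 + 15552*(g:ℚ)^5 := by positivity
      linarith
    have h2 := mul_lt_mul_of_pos_left key hM
    push_cast at h2 ⊢
    linarith

lemma step2 (k : ℤ) (hk : 0 ≤ k) :
    |cInt (k+3) / cInt k| ≤ |cInt (k+2+3) / cInt (k+2)| := by
  obtain ⟨n, rfl⟩ := Int.eq_ofNat_of_zero_le hk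
  set g := n / 3 with hg
  rcases (show n % 3 = 0 ∨ n % 3 = 1 ∨ n % 3 = 2 by omega) with h|h|h
  · rw [show (n:ℤ) = 3*(g:ℤ) from by omega,
        show (3*(g:ℤ)+2+3) = 3*(g:ℤ)+5 from by ring]
    exact q20 g
  · rw [show (n:ℤ) = 3*(g:ℤ)+1 from by omega,
        show (3*(g:ℤ)+1+3) = 3*(g:ℤ)+4 from by ring,
        show (3*(g:ℤ)+1+2+3) = 3*(g:ℤ)+6 from by ring,
        show (3*(g:ℤ)+1+2) = 3*(g:ℤ)+3 from by ring]
    exact q21 g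
  · rw [show (n:ℤ) = 3*(g:ℤ)+2 from by omega,
        show (3*(g:ℤ)+2+3) = 3*(g:ℤ)+5 from by ring,
        show (3*(g:ℤ)+2+2+3) = 3*(g:ℤ)+7 from by ring,
        show (3*(g:ℤ)+2+2) = 3*(g:ℤ)+4 from by ring]
    exact q22 g

lemma step3 (k : ℤ) (hk : 0 ≤ k) :
    |cInt (k+3) / cInt k| ≤ |cInt (k+3+3) / cInt (k+3)| := by
  obtain ⟨n, rfl⟩ := Int.eq_ofNat_of_zero_le hk
  set g := n / 3 with hg
  rcases (show n % 3 = 0 ∨ n % 3 = 1 ∨ n % 3 = 2 by omega) with h|h|h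
  · rw [show (n:ℤ) = 3*(g:ℤ) from by omega,
        show (3*(g:ℤ)+3+3) = 3*(g:ℤ)+6 from by ring]
    exact q30 g
  · rw [show (n:ℤ) = 3*(g:ℤ)+1 from by omega,
        show (3*(g:ℤ)+1+3) = 3*(g:ℤ)+4 from by ring,
        show (3*(g:ℤ)+4+3) = 3*(g:ℤ)+7 from by ring]
    exact q31 g
  · rw [show (n:ℤ) = 3*(g:ℤ)+2 from by omega,
        show (3*(g:ℤ)+2+3) = 3*(g:ℤ)+5 from by ring,
        show (3*(g:ℤ)+5+3) = 3*(g:ℤ)+8 from by ring]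
    exact q32 g

lemma chain (k : ℤ) (hk : 0 ≤ k) :
    ∀ n : ℕ, 2 ≤ n → |cInt (k+3) / cInt k| ≤ |cInt (k+n+3) / cInt (k+n)| := by
  intro n
  induction n using Nat.strong_induction_on with
  | _ n ih =>
    intro hn
    rcases (show n = 2 ∨ n = 3 ∨ 4 ≤ n by omega) with h|h|h4
    · subst h
      have := step2 k hk
      rw [show (k+((2:ℕ):ℤ)) = k+2 from by norm_num]
      exact this
    · subst h
      have := step3 k hk
      rw [show (k+((3:ℕ):ℤ)) = k+3 from by norm_num]
      exact this
    · have h1 := ih (n-2) (by omega) (by omega)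
      have h2 := step2 (k + ((n-2:ℕ):ℤ)) (by positivity)
      rw [show (k+((n-2:ℕ):ℤ)+2+3) = k+(n:ℤ)+3 from by omega,
          show (k+((n-2:ℕ):ℤ)+2) = k+(n:ℤ) from by omega] at h2
      exact le_trans h1 h2


/-- the sequence (|c_k|)_{k≥0} is strictly increasing, and for all
ℓ ≥ 2 and k ≥ 0 one has |c_{k+ℓ+3}/c_{k+ℓ}| ≥ |c_{k+3}/c_k|. -/
theorem stmt8 :
    (∀ k : ℤ, 0 ≤ k → |cInt k| < |cInt (k + 1)|) ∧
    (∀ k l : ℤ, 0 ≤ k → 2 ≤ l →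
      |cInt (k + 3) / cInt k| ≤ |cInt (k + l + 3) / cInt (k + l)|) := by
  constructor
  · intro k hk; exact mono k hk
  · intro k l hk hl
    obtain ⟨n, rfl⟩ := Int.eq_ofNat_of_zero_le (show (0:ℤ) ≤ l by omega)
    exact chain k hk n (by exact_mod_cast hl)
end

section
/- With a_{k_1,k_2} = tr(A_{k_1}A_{k_2}) and b_k as defined, the following closed-form identity holds for all g ≥ 1 and k ≥ 0: (24^g·g!/(6g-1)!!)·Σ_{l=0}^{k+1} a_{l-1, 3g-l} equals ((6g-3-2k)!!/(6g-1)!!) times: (6j-1)!!·(g-1)!/(j!(g-j)!)·(g-2j) if k = 3j-1; -2·(6j+1)!!·(g-1)!/(j!(g-1-j)!) if k = 3j; 2·(6j+3)!!·(g-1)!/(j!(g-1-j)!) if k = 3j+1. -/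
/-- The matrices A_k (k ≥ -1): A_{3g} = b_{3g}·μ1, A_{3g-1} = b_{3g-1}·μ2,
A_{3g-2} = -b_{3g-2}·μ3, where μ1 = [[0,1],[0,0]], μ2 = [[0,0],[1,0]],
μ3 = [[1,0],[0,-1]]. -/
def Aint (k : ℤ) : Matrix (Fin 2) (Fin 2) ℚ :=
  if k % 3 = 0 then bInt k • !![0, 1; 0, 0]
  else if k % 3 = 2 then bInt k • !![0, 0; 1, 0]
  else (-(bInt k)) • !![1, 0; 0, -1]

/-- a_{k_1,k_2} = tr(A_{k_1}A_{k_2}), with the convention a = 0 if some index < -1. -/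
def aPair (k1 k2 : ℤ) : ℚ :=
  if k1 < -1 ∨ k2 < -1 then 0 else Matrix.trace (Aint k1 * Aint k2)

/-- The left-hand side (24^g·g!/(6g-1)!!)·Σ_{l=0}^{k+1} a_{l-1,3g-l}. -/
def lhs16 (g k : ℕ) : ℚ :=
  (24 ^ g * (g.factorial : ℚ) / ((6 * g - 1).doubleFactorial : ℚ)) *
    ∑ l ∈ Finset.range (k + 2), aPair ((l : ℤ) - 1) (3 * (g : ℤ) - (l : ℤ))

lemma dfac_ne (n : ℕ) : ((n.doubleFactorial : ℚ)) ≠ 0 := by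
  exact_mod_cast (Nat.doubleFactorial_pos n).ne'

lemma fac_ne (n : ℕ) : ((n.factorial : ℚ)) ≠ 0 := by
  exact_mod_cast n.factorial_ne_zero

lemma pow24_ne (n : ℕ) : ((24 : ℚ) ^ n) ≠ 0 := pow_ne_zero _ (by norm_num)

lemma bInt_3 (m : ℕ) : bInt (3 * m) = -(Nat.doubleFactorial (6 * m - 1) : ℚ) / (24 ^ m * m.factorial) := by
  have h0 : (3 * (m : ℤ)) % 3 = 0 := Int.mul_emod_right 3 m
  have h1 : (3 * (m : ℤ)) / 3 = m := Int.mul_ediv_cancel_left _ (by norm_num)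
  have h2 : ((6 * (m : ℤ) - 1)).toNat = 6 * m - 1 := by omega
  rw [bInt, if_pos h0, h1, h2, Int.toNat_natCast]

lemma bInt_1 (m : ℕ) : bInt (3 * m + 1) = (1 / 2 : ℚ) * (Nat.doubleFactorial (6 * m + 1) : ℚ) / (24 ^ m * m.factorial) := by
  have h1 : (3 * (m : ℤ) + 1 + 2) / 3 = m + 1 := by omega
  rw [bInt, if_neg (by omega), if_neg (by omega), h1]
  have h2 : ((6 * ((m : ℤ) + 1) - 5)).toNat = 6 * m + 1 := by omega
  have h3 : ((m : ℤ) + 1 - 1).toNat = m := by omega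
  rw [h2, h3]
  ring

lemma bInt_2 (m : ℕ) : bInt (3 * m + 2) =
    ((6 * (m : ℚ) + 7) / (6 * (m : ℚ) + 5)) * (Nat.doubleFactorial (6 * m + 5) : ℚ)
      / (24 ^ (m + 1) * (m + 1).factorial) := by
  have h0 : (3 * (m : ℤ) + 2) % 3 = 2 := by omega
  have h1 : (3 * (m : ℤ) + 2 + 1) / 3 = m + 1 := by omega
  rw [bInt, if_neg (by omega), if_pos h0, h1]
  have h2 : ((6 * ((m : ℤ) + 1) - 1)).toNat = 6 * m + 5 := by omega
  have h3 : ((m : ℤ) + 1).toNat = m + 1 := by omega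
  rw [h2, h3]
  push_cast
  ring

lemma bInt_neg1 : bInt (-1) = -1 := by
  have h0 : (-1 : ℤ) % 3 = 2 := by decide
  rw [bInt, if_neg (by omega), if_pos h0]
  norm_num [Nat.doubleFactorial]
  rfl

lemma aPair_02 {k1 k2 : ℤ} (h1 : -1 ≤ k1) (h2 : -1 ≤ k2) (r1 : k1 % 3 = 0) (r2 : k2 % 3 = 2) :
    aPair k1 k2 = bInt k1 * bInt k2 := by
  rw [aPair, if_neg (by omega), Aint, Aint, if_pos r1, if_neg (by omega), if_pos r2]
  simp [Matrix.trace_fin_two, Matrix.mul_apply, Fin.sum_univ_two]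

lemma aPair_20 {k1 k2 : ℤ} (h1 : -1 ≤ k1) (h2 : -1 ≤ k2) (r1 : k1 % 3 = 2) (r2 : k2 % 3 = 0) :
    aPair k1 k2 = bInt k1 * bInt k2 := by
  rw [aPair, if_neg (by omega), Aint, Aint, if_neg (by omega), if_pos r1, if_pos r2]
  simp [Matrix.trace_fin_two, Matrix.mul_apply, Fin.sum_univ_two]

lemma aPair_11 {k1 k2 : ℤ} (h1 : -1 ≤ k1) (h2 : -1 ≤ k2) (r1 : k1 % 3 = 1) (r2 : k2 % 3 = 1) :
    aPair k1 k2 = 2 * (bInt k1 * bInt k2) := by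
  rw [aPair, if_neg (by omega), Aint, Aint, if_neg (by omega), if_neg (by omega),
    if_neg (by omega), if_neg (by omega)]
  simp [Matrix.trace_fin_two, Matrix.mul_apply, Fin.sum_univ_two]
  ring

lemma valA (j d : ℕ) : aPair (3 * (j : ℤ)) (3 * (d : ℤ) + 2) =
    (-(Nat.doubleFactorial (6 * j - 1) : ℚ) / (24 ^ j * j.factorial)) *
      (((6 * (d : ℚ) + 7) / (6 * (d : ℚ) + 5)) * (Nat.doubleFactorial (6 * d + 5) : ℚ)
        / (24 ^ (d + 1) * (d + 1).factorial)) := by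
  rw [aPair_02 (by omega) (by omega) (by omega) (by omega), bInt_3, bInt_2]

lemma valB (j d : ℕ) : aPair (3 * (j : ℤ) + 1) (3 * (d : ℤ) + 1) =
    2 * (((1 / 2 : ℚ) * (Nat.doubleFactorial (6 * j + 1) : ℚ) / (24 ^ j * j.factorial)) *
      ((1 / 2 : ℚ) * (Nat.doubleFactorial (6 * d + 1) : ℚ) / (24 ^ d * d.factorial))) := by
  rw [aPair_11 (by omega) (by omega) (by omega) (by omega), bInt_1, bInt_1]

lemma valC (j d : ℕ) : aPair (3 * (j : ℤ) + 2) (3 * (d : ℤ)) =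
    (((6 * (j : ℚ) + 7) / (6 * (j : ℚ) + 5)) * (Nat.doubleFactorial (6 * j + 5) : ℚ)
        / (24 ^ (j + 1) * (j + 1).factorial)) *
      (-(Nat.doubleFactorial (6 * d - 1) : ℚ) / (24 ^ d * d.factorial)) := by
  rw [aPair_20 (by omega) (by omega) (by omega) (by omega), bInt_2, bInt_3]

lemma valT0 (g : ℕ) : aPair (-1) (3 * (g : ℤ)) =
    (Nat.doubleFactorial (6 * g - 1) : ℚ) / (24 ^ g * g.factorial) := by
  rw [aPair_20 (by omega) (by omega) (by decide) (by omega), bInt_neg1, bInt_3]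
  ring

lemma lhs16_succ (g k : ℕ) :
    lhs16 g (k + 1) = lhs16 g k +
      (24 ^ g * (g.factorial : ℚ) / ((6 * g - 1).doubleFactorial : ℚ)) *
        aPair ((k : ℤ) + 1) (3 * (g : ℤ) - (k : ℤ) - 2) := by
  have e : aPair (((k + 2 : ℕ) : ℤ) - 1) (3 * (g : ℤ) - ((k + 2 : ℕ) : ℤ))
      = aPair ((k : ℤ) + 1) (3 * (g : ℤ) - (k : ℤ) - 2) := by
    congr 1 <;> push_cast <;> ring
  rw [lhs16, lhs16, show k + 1 + 2 = k + 2 + 1 from by omega, Finset.sum_range_succ, e, mul_add]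

lemma base2 (g d : ℕ) (hg : g = d + 1) :
    lhs16 g 0
        = (((6 * g - 3 - 2 * (3 * 0)).doubleFactorial : ℚ)
            / ((6 * g - 1).doubleFactorial : ℚ)) *
          (-2 * ((6 * 0 + 1).doubleFactorial : ℚ) * ((g - 1).factorial : ℚ)
              / ((Nat.factorial 0 : ℚ) * ((g - 1 - 0).factorial : ℚ))) := by
  subst hg
  rw [lhs16]
  rw [show (0:ℕ) + 2 = 1 + 1 from rfl, Finset.sum_range_succ, Finset.sum_range_one]
  rw [show ((0 : ℕ) : ℤ) - 1 = -1 from by norm_num,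
      show 3 * ((d + 1 : ℕ) : ℤ) - ((0 : ℕ) : ℤ) = 3 * ((d + 1 : ℕ) : ℤ) from by push_cast; ring,
      show ((1 : ℕ) : ℤ) - 1 = 3 * ((0 : ℕ) : ℤ) from by norm_num,
      show 3 * ((d + 1 : ℕ) : ℤ) - ((1 : ℕ) : ℤ) = 3 * ((d : ℕ) : ℤ) + 2 from by push_cast; ring,
      valT0 (d + 1), valA 0 d]
  rw [show 6 * (d + 1) - 1 = 6 * d + 5 from by omega,
      show 6 * (d + 1) - 3 - 2 * (3 * 0) = 6 * d + 3 from by omega,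
      show (d + 1) - 1 = d from by omega, show d - 0 = d from by omega,
      show 6 * 0 + 1 = 1 from by norm_num, show 6 * 0 - 1 = 0 from by omega]
  have hD : ((Nat.doubleFactorial (6 * d + 5) : ℚ)) = (6 * (d : ℚ) + 5) * (Nat.doubleFactorial (6 * d + 3) : ℚ) := by
    rw [show 6 * d + 5 = 6 * d + 3 + 2 from by omega, Nat.doubleFactorial_add_two]
    push_cast; ring
  rw [hD]
  have n1 : (6 * (d : ℚ) + 5) ≠ 0 := by positivity
  have n2 : (6 * (d : ℚ) + 3) ≠ 0 := by positivity
  simp only [Nat.doubleFactorial, Nat.factorial]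
  field_simp
  ring

lemma step23 (g j d : ℕ) (hg : g = j + 1 + d)
    (h2 : lhs16 g (3 * j)
        = (((6 * g - 3 - 2 * (3 * j)).doubleFactorial : ℚ)
            / ((6 * g - 1).doubleFactorial : ℚ)) *
          (-2 * ((6 * j + 1).doubleFactorial : ℚ) * ((g - 1).factorial : ℚ)
              / ((j.factorial : ℚ) * ((g - 1 - j).factorial : ℚ)))) :
    lhs16 g (3 * j + 1)
        = (((6 * g - 3 - 2 * (3 * j + 1)).doubleFactorial : ℚ)
            / ((6 * g - 1).doubleFactorial : ℚ)) *
          (2 * ((6 * j + 3).doubleFactorial : ℚ) * ((g - 1).factorial : ℚ)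
              / ((j.factorial : ℚ) * ((g - 1 - j).factorial : ℚ))) := by
  subst hg
  rw [lhs16_succ, h2]
  rw [show ((3 * j : ℕ) : ℤ) + 1 = 3 * (j : ℤ) + 1 from by push_cast; ring,
      show 3 * ((j + 1 + d : ℕ) : ℤ) - ((3 * j : ℕ) : ℤ) - 2 = 3 * (d : ℤ) + 1 from by push_cast; ring,
      valB j d]
  rw [show 6 * (j + 1 + d) - 3 - 2 * (3 * j) = 6 * d + 3 from by omega,
      show 6 * (j + 1 + d) - 3 - 2 * (3 * j + 1) = 6 * d + 1 from by omega,
      show 6 * (j + 1 + d) - 1 = 6 * j + 6 * d + 5 from by omega,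
      show j + 1 + d - 1 = j + d from by omega,
      show j + d - j = d from by omega,
      show j + 1 + d = j + d + 1 from by omega,
      Nat.factorial_succ (j + d)]
  have hD : ((Nat.doubleFactorial (6 * d + 3) : ℚ)) = (6 * (d : ℚ) + 3) * (Nat.doubleFactorial (6 * d + 1) : ℚ) := by
    rw [show 6 * d + 3 = 6 * d + 1 + 2 from by omega, Nat.doubleFactorial_add_two]
    push_cast; ring
  have hD2 : ((Nat.doubleFactorial (6 * j + 3) : ℚ)) = (6 * (j : ℚ) + 3) * (Nat.doubleFactorial (6 * j + 1) : ℚ) := by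
    rw [show 6 * j + 3 = 6 * j + 1 + 2 from by omega, Nat.doubleFactorial_add_two]
    push_cast; ring
  rw [hD, hD2]
  push_cast
  field_simp
  ring

lemma step31a (g j : ℕ) (hg : g = j + 1)
    (h3 : lhs16 g (3 * j + 1)
        = (((6 * g - 3 - 2 * (3 * j + 1)).doubleFactorial : ℚ)
            / ((6 * g - 1).doubleFactorial : ℚ)) *
          (2 * ((6 * j + 3).doubleFactorial : ℚ) * ((g - 1).factorial : ℚ)
              / ((j.factorial : ℚ) * ((g - 1 - j).factorial : ℚ)))) :
    lhs16 g (3 * (j + 1) - 1)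
        = (((6 * g - 3 - 2 * (3 * (j + 1) - 1)).doubleFactorial : ℚ)
            / ((6 * g - 1).doubleFactorial : ℚ)) *
          (((6 * (j + 1) - 1).doubleFactorial : ℚ) * ((g - 1).factorial : ℚ)
              / (((j + 1).factorial : ℚ) * ((g - (j + 1)).factorial : ℚ))
            * ((g : ℚ) - 2 * ((j + 1 : ℕ) : ℚ))) := by
  subst hg
  have key := lhs16_succ (j + 1) (3 * j + 1)
  rw [show 3 * j + 1 + 1 = 3 * (j + 1) - 1 from by omega] at key
  rw [key, h3]
  rw [show ((3 * j + 1 : ℕ) : ℤ) + 1 = 3 * (j : ℤ) + 2 from by push_cast; ring,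
      show 3 * ((j + 1 : ℕ) : ℤ) - ((3 * j + 1 : ℕ) : ℤ) - 2 = 3 * ((0 : ℕ) : ℤ) from by push_cast; ring,
      valC j 0]
  rw [show 6 * (j + 1) - 3 - 2 * (3 * (j + 1) - 1) = 0 from by omega,
      show 6 * (j + 1) - 3 - 2 * (3 * j + 1) = 1 from by omega,
      show 6 * (j + 1) - 1 = 6 * j + 5 from by omega,
      show (j + 1) - 1 = j from by omega,
      show j - j = 0 from by omega,
      show (j + 1) - (j + 1) = 0 from by omega,
      show 6 * 0 - 1 = 0 from by omega,
      Nat.factorial_succ j]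
  have hD : ((Nat.doubleFactorial (6 * j + 5) : ℚ)) = (6 * (j : ℚ) + 5) * (Nat.doubleFactorial (6 * j + 3) : ℚ) := by
    rw [show 6 * j + 5 = 6 * j + 3 + 2 from by omega, Nat.doubleFactorial_add_two]
    push_cast; ring
  rw [hD]
  have n1 : (6 * (j : ℚ) + 5) ≠ 0 := by positivity
  simp only [Nat.doubleFactorial, Nat.factorial]
  push_cast
  field_simp
  ring

lemma step31b (g j d : ℕ) (hg : g = j + 2 + d)
    (h3 : lhs16 g (3 * j + 1)
        = (((6 * g - 3 - 2 * (3 * j + 1)).doubleFactorial : ℚ)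
            / ((6 * g - 1).doubleFactorial : ℚ)) *
          (2 * ((6 * j + 3).doubleFactorial : ℚ) * ((g - 1).factorial : ℚ)
              / ((j.factorial : ℚ) * ((g - 1 - j).factorial : ℚ)))) :
    lhs16 g (3 * (j + 1) - 1)
        = (((6 * g - 3 - 2 * (3 * (j + 1) - 1)).doubleFactorial : ℚ)
            / ((6 * g - 1).doubleFactorial : ℚ)) *
          (((6 * (j + 1) - 1).doubleFactorial : ℚ) * ((g - 1).factorial : ℚ)
              / (((j + 1).factorial : ℚ) * ((g - (j + 1)).factorial : ℚ))
            * ((g : ℚ) - 2 * ((j + 1 : ℕ) : ℚ))) := by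
  subst hg
  have key := lhs16_succ (j + 2 + d) (3 * j + 1)
  rw [show 3 * j + 1 + 1 = 3 * (j + 1) - 1 from by omega] at key
  rw [key, h3]
  rw [show ((3 * j + 1 : ℕ) : ℤ) + 1 = 3 * (j : ℤ) + 2 from by push_cast; ring,
      show 3 * ((j + 2 + d : ℕ) : ℤ) - ((3 * j + 1 : ℕ) : ℤ) - 2 = 3 * ((d + 1 : ℕ) : ℤ) from by push_cast; ring,
      valC j (d + 1)]
  rw [show 6 * (j + 2 + d) - 3 - 2 * (3 * (j + 1) - 1) = 6 * d + 5 from by omega,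
      show 6 * (j + 2 + d) - 3 - 2 * (3 * j + 1) = 6 * d + 7 from by omega,
      show 6 * (j + 2 + d) - 1 = 6 * j + 6 * d + 11 from by omega,
      show j + 2 + d - 1 = j + d + 1 from by omega,
      show j + d + 1 - j = d + 1 from by omega,
      show j + 2 + d - (j + 1) = d + 1 from by omega,
      show 6 * (d + 1) - 1 = 6 * d + 5 from by omega,
      show 6 * (j + 1) - 1 = 6 * j + 5 from by omega,
      show j + 2 + d = (j + d + 1) + 1 from by omega,
      Nat.factorial_succ (j + d + 1), Nat.factorial_succ d, Nat.factorial_succ j]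
  have hD7 : ((Nat.doubleFactorial (6 * d + 7) : ℚ)) = (6 * (d : ℚ) + 7) * (Nat.doubleFactorial (6 * d + 5) : ℚ) := by
    rw [show 6 * d + 7 = 6 * d + 5 + 2 from by omega, Nat.doubleFactorial_add_two]
    push_cast; ring
  have hDj : ((Nat.doubleFactorial (6 * j + 5) : ℚ)) = (6 * (j : ℚ) + 5) * (Nat.doubleFactorial (6 * j + 3) : ℚ) := by
    rw [show 6 * j + 5 = 6 * j + 3 + 2 from by omega, Nat.doubleFactorial_add_two]
    push_cast; ring
  rw [hD7, hDj]
  have n1 : (6 * (j : ℚ) + 5) ≠ 0 := by positivity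
  push_cast
  field_simp
  ring

lemma step12 (g j d : ℕ) (hg : g = j + 2 + d)
    (h1 : lhs16 g (3 * (j + 1) - 1)
        = (((6 * g - 3 - 2 * (3 * (j + 1) - 1)).doubleFactorial : ℚ)
            / ((6 * g - 1).doubleFactorial : ℚ)) *
          (((6 * (j + 1) - 1).doubleFactorial : ℚ) * ((g - 1).factorial : ℚ)
              / (((j + 1).factorial : ℚ) * ((g - (j + 1)).factorial : ℚ))
            * ((g : ℚ) - 2 * ((j + 1 : ℕ) : ℚ)))) :
    lhs16 g (3 * (j + 1))
        = (((6 * g - 3 - 2 * (3 * (j + 1))).doubleFactorial : ℚ)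
            / ((6 * g - 1).doubleFactorial : ℚ)) *
          (-2 * ((6 * (j + 1) + 1).doubleFactorial : ℚ) * ((g - 1).factorial : ℚ)
              / (((j + 1).factorial : ℚ) * ((g - 1 - (j + 1)).factorial : ℚ))) := by
  subst hg
  have key := lhs16_succ (j + 2 + d) (3 * (j + 1) - 1)
  rw [show 3 * (j + 1) - 1 + 1 = 3 * (j + 1) from by omega] at key
  rw [key, h1]
  rw [show ((3 * (j + 1) - 1 : ℕ) : ℤ) + 1 = 3 * ((j + 1 : ℕ) : ℤ) from by omega,
      show 3 * ((j + 2 + d : ℕ) : ℤ) - ((3 * (j + 1) - 1 : ℕ) : ℤ) - 2 = 3 * ((d : ℕ) : ℤ) + 2 from by omega,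
      valA (j + 1) d]
  rw [show 6 * (j + 2 + d) - 3 - 2 * (3 * (j + 1) - 1) = 6 * d + 5 from by omega,
      show 6 * (j + 2 + d) - 3 - 2 * (3 * (j + 1)) = 6 * d + 3 from by omega,
      show 6 * (j + 2 + d) - 1 = 6 * j + 6 * d + 11 from by omega,
      show j + 2 + d - 1 = j + d + 1 from by omega,
      show j + d + 1 - (j + 1) = d from by omega,
      show j + 2 + d - (j + 1) = d + 1 from by omega,
      show 6 * (j + 1) - 1 = 6 * j + 5 from by omega,
      show 6 * (j + 1) + 1 = 6 * j + 7 from by omega,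
      show j + 2 + d = (j + d + 1) + 1 from by omega,
      Nat.factorial_succ (j + d + 1), Nat.factorial_succ d]
  have hD5 : ((Nat.doubleFactorial (6 * d + 5) : ℚ)) = (6 * (d : ℚ) + 5) * (Nat.doubleFactorial (6 * d + 3) : ℚ) := by
    rw [show 6 * d + 5 = 6 * d + 3 + 2 from by omega, Nat.doubleFactorial_add_two]
    push_cast; ring
  have hD7 : ((Nat.doubleFactorial (6 * j + 7) : ℚ)) = (6 * (j : ℚ) + 7) * (Nat.doubleFactorial (6 * j + 5) : ℚ) := by
    rw [show 6 * j + 7 = 6 * j + 5 + 2 from by omega, Nat.doubleFactorial_add_two]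
    push_cast; ring
  rw [hD5, hD7]
  have n1 : (6 * (d : ℚ) + 5) ≠ 0 := by positivity
  push_cast
  field_simp
  ring

lemma main16 (g : ℕ) : ∀ j : ℕ, j + 1 ≤ g →
    (lhs16 g (3 * j)
        = (((6 * g - 3 - 2 * (3 * j)).doubleFactorial : ℚ)
            / ((6 * g - 1).doubleFactorial : ℚ)) *
          (-2 * ((6 * j + 1).doubleFactorial : ℚ) * ((g - 1).factorial : ℚ)
              / ((j.factorial : ℚ) * ((g - 1 - j).factorial : ℚ)))) ∧
    (lhs16 g (3 * j + 1)
        = (((6 * g - 3 - 2 * (3 * j + 1)).doubleFactorial : ℚ)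
            / ((6 * g - 1).doubleFactorial : ℚ)) *
          (2 * ((6 * j + 3).doubleFactorial : ℚ) * ((g - 1).factorial : ℚ)
              / ((j.factorial : ℚ) * ((g - 1 - j).factorial : ℚ)))) ∧
    (lhs16 g (3 * (j + 1) - 1)
        = (((6 * g - 3 - 2 * (3 * (j + 1) - 1)).doubleFactorial : ℚ)
            / ((6 * g - 1).doubleFactorial : ℚ)) *
          (((6 * (j + 1) - 1).doubleFactorial : ℚ) * ((g - 1).factorial : ℚ)
              / (((j + 1).factorial : ℚ) * ((g - (j + 1)).factorial : ℚ))
            * ((g : ℚ) - 2 * ((j + 1 : ℕ) : ℚ)))) := by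
  intro j
  induction j with
  | zero =>
    intro h
    have h2 := base2 g (g - 1) (by omega)
    have h3 := step23 g 0 (g - 1) (by omega) h2
    refine ⟨h2, h3, ?_⟩
    rcases Nat.lt_or_ge 1 g with hlt | hge
    · exact step31b g 0 (g - 2) (by omega) h3
    · exact step31a g 0 (by omega) h3
  | succ j ih =>
    intro h
    obtain ⟨ih2, ih3, ih1⟩ := ih (by omega)
    have h2 := step12 g j (g - (j + 2)) (by omega) ih1
    have h3 := step23 g (j + 1) (g - (j + 2)) (by omega) h2
    refine ⟨h2, h3, ?_⟩
    rcases Nat.lt_or_ge (j + 2) g with hlt | hge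
    · exact step31b g (j + 1) (g - (j + 3)) (by omega) h3
    · exact step31a g (j + 1) (by omega) h3

/-- the closed-form identity for (24^g g!/(6g-1)!!)·Σ_{l=0}^{k+1} a_{l-1,3g-l},
in the three cases k = 3j-1, k = 3j, k = 3j+1. -/
theorem stmt16 (g : ℕ) (hg : 1 ≤ g) :
    (∀ j : ℕ, 1 ≤ j → j ≤ g →
      lhs16 g (3 * j - 1)
        = (((6 * g - 3 - 2 * (3 * j - 1)).doubleFactorial : ℚ)
            / ((6 * g - 1).doubleFactorial : ℚ)) *
          (((6 * j - 1).doubleFactorial : ℚ) * ((g - 1).factorial : ℚ)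
              / ((j.factorial : ℚ) * ((g - j).factorial : ℚ)) * ((g : ℚ) - 2 * j))) ∧
    (∀ j : ℕ, j + 1 ≤ g →
      lhs16 g (3 * j)
        = (((6 * g - 3 - 2 * (3 * j)).doubleFactorial : ℚ)
            / ((6 * g - 1).doubleFactorial : ℚ)) *
          (-2 * ((6 * j + 1).doubleFactorial : ℚ) * ((g - 1).factorial : ℚ)
              / ((j.factorial : ℚ) * ((g - 1 - j).factorial : ℚ)))) ∧
    (∀ j : ℕ, j + 1 ≤ g →
      lhs16 g (3 * j + 1)
        = (((6 * g - 3 - 2 * (3 * j + 1)).doubleFactorial : ℚ)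
            / ((6 * g - 1).doubleFactorial : ℚ)) *
          (2 * ((6 * j + 3).doubleFactorial : ℚ) * ((g - 1).factorial : ℚ)
              / ((j.factorial : ℚ) * ((g - 1 - j).factorial : ℚ)))) := by
  refine ⟨?_, ?_, ?_⟩
  · intro j h1 h2
    obtain ⟨j', rfl⟩ : ∃ j', j = j' + 1 := ⟨j - 1, by omega⟩
    exact (main16 g j' (by omega)).2.2
  · intro j hj
    exact (main16 g j hj).1
  · intro j hj
    exact (main16 g j hj).2.1
end
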